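/- Let m > 0, α > 0 and n ∈ ℕ. There exists a constant C = C(n,m) > 0 such that for every entire function Φ : ℂ³ → ℂ⁴, the function Ψ : M_ℂ → ℂ⁴ defined by Ψ(p) = ((p̸ + m)/(2m)) γ⁰ Φ(p⃗) for p = (p⁰, p⃗) ∈ M_ℂ satisfies ‖Ψ‖_{M,α,n} ≤ C · ‖Φ‖_{3,α,n}. -/

import Mathlib

open Matrix MeasureTheory
open scoped BigOperators Pointwise ComplexOrder ENNReal NNReal

noncomputable section

/-- Euclidean norm on `ℂ⁴`. -/
def enorm4 (p : Fin 4 → ℂ) : ℝ := Real.sqrt (∑ i, ‖p i‖ ^ 2)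

/-- Euclidean norm on `ℂ³`. -/
def enorm3 (p : Fin 3 → ℂ) : ℝ := Real.sqrt (∑ i, ‖p i‖ ^ 2)

/-- Euclidean norm of the (componentwise) imaginary part of a vector in `ℂ⁴`. -/
def imNorm4 (p : Fin 4 → ℂ) : ℝ := Real.sqrt (∑ i, (p i).im ^ 2)

/-- Euclidean norm of the (componentwise) imaginary part of a vector in `ℂ³`. -/
def imNorm3 (p : Fin 3 → ℂ) : ℝ := Real.sqrt (∑ i, (p i).im ^ 2)

/-- The spatial part `p⃗` of a four-vector `p = (p⁰, p⃗)`. -/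
def spat (p : Fin 4 → ℂ) : Fin 3 → ℂ := fun i => p i.succ

/-- The complexified mass shell `M_ℂ = {p ∈ ℂ⁴ | (p⁰)² - (p¹)² - (p²)² - (p³)² = m²}`. -/
def MassShellC (m : ℝ) : Set (Fin 4 → ℂ) :=
  {p | p 0 ^ 2 - p 1 ^ 2 - p 2 ^ 2 - p 3 ^ 2 = (m : ℂ) ^ 2}

/-- The Dirac gamma matrix `γ⁰` in the standard representation. -/
def γ0 : Matrix (Fin 4) (Fin 4) ℂ :=
  !![1, 0, 0, 0; 0, 1, 0, 0; 0, 0, -1, 0; 0, 0, 0, -1]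

/-- The Dirac gamma matrix `γ¹`. -/
def γ1 : Matrix (Fin 4) (Fin 4) ℂ :=
  !![0, 0, 0, 1; 0, 0, 1, 0; 0, -1, 0, 0; -1, 0, 0, 0]

/-- The Dirac gamma matrix `γ²`. -/
def γ2 : Matrix (Fin 4) (Fin 4) ℂ :=
  !![0, 0, 0, -Complex.I; 0, 0, Complex.I, 0; 0, Complex.I, 0, 0; -Complex.I, 0, 0, 0]

/-- The Dirac gamma matrix `γ³`. -/
def γ3 : Matrix (Fin 4) (Fin 4) ℂ :=
  !![0, 0, 1, 0; 0, 0, 0, -1; -1, 0, 0, 0; 0, 1, 0, 0]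

/-- The family `μ ↦ γ^μ`. -/
def gam : Fin 4 → Matrix (Fin 4) (Fin 4) ℂ := ![γ0, γ1, γ2, γ3]

/-- Feynman slash of a four-vector (with upper indices):
`p̸ = p⁰γ⁰ - p¹γ¹ - p²γ² - p³γ³`. -/
def slash (p : Fin 4 → ℂ) : Matrix (Fin 4) (Fin 4) ℂ :=
  p 0 • γ0 - p 1 • γ1 - p 2 • γ2 - p 3 • γ3

/-- Slash of a covector (lower indices): `A̸ = ∑ μ, A_μ γ^μ`. -/
def slashLow (a : Fin 4 → ℂ) : Matrix (Fin 4) (Fin 4) ℂ := ∑ μ, a μ • gam μ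

/-- Complexification of a real four-vector. -/
def cv4 (p : Fin 4 → ℝ) : Fin 4 → ℂ := fun μ => (p μ : ℂ)

/-- The Paley-Wiener norm `‖Ψ‖_{M,α,n} = sup_{p ∈ M_ℂ} |p|^(n-1) e^{-α|Im p⃗|} |Ψ(p)|`,
valued in `ℝ≥0∞`. -/
def normME (m α : ℝ) (n : ℕ) (Ψ : (Fin 4 → ℂ) → Fin 4 → ℂ) : ℝ≥0∞ :=
  ⨆ p : MassShellC m, ENNReal.ofReal
    (enorm4 (p : Fin 4 → ℂ) ^ (n - 1) * Real.exp (-α * imNorm3 (spat (p : Fin 4 → ℂ)))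
      * enorm4 (Ψ (p : Fin 4 → ℂ)))

/-- The Paley-Wiener norm `‖Φ‖_{3,α,n} = sup_{p⃗ ∈ ℂ³} (m ∨ |p⃗|)ⁿ e^{-α|Im p⃗|} |Φ(p⃗)|`,
valued in `ℝ≥0∞`. -/
def norm3E (m α : ℝ) (n : ℕ) (Φ : (Fin 3 → ℂ) → Fin 4 → ℂ) : ℝ≥0∞ :=
  ⨆ z : Fin 3 → ℂ, ENNReal.ofReal
    (max m (enorm3 z) ^ n * Real.exp (-α * imNorm3 z) * enorm4 (Φ z))

/-! ### Auxiliary lemmas -/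

lemma enorm4_nonneg' (x : Fin 4 → ℂ) : 0 ≤ enorm4 x := Real.sqrt_nonneg _

lemma enorm3_nonneg' (x : Fin 3 → ℂ) : 0 ≤ enorm3 x := Real.sqrt_nonneg _

lemma entry_le_enorm4 (x : Fin 4 → ℂ) (i : Fin 4) : ‖x i‖ ≤ enorm4 x := by
  rw [enorm4, show ‖x i‖ = Real.sqrt (‖x i‖ ^ 2) from (Real.sqrt_sq (norm_nonneg _)).symm]
  exact Real.sqrt_le_sqrt (Finset.single_le_sum (f := fun j => ‖x j‖ ^ 2)
    (fun j _ => sq_nonneg _) (Finset.mem_univ i))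

lemma enorm4_le_sum (x : Fin 4 → ℂ) : enorm4 x ≤ ∑ i, ‖x i‖ := by
  rw [enorm4]
  calc Real.sqrt (∑ i, ‖x i‖ ^ 2) ≤ Real.sqrt ((∑ i, ‖x i‖) ^ 2) :=
        Real.sqrt_le_sqrt (Finset.sum_sq_le_sq_sum_of_nonneg (fun i _ => norm_nonneg _))
    _ = ∑ i, ‖x i‖ := Real.sqrt_sq (Finset.sum_nonneg fun i _ => norm_nonneg _)

lemma enorm4_smul (c : ℂ) (x : Fin 4 → ℂ) : enorm4 (c • x) = ‖c‖ * enorm4 x := by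
  simp only [enorm4, Pi.smul_apply, smul_eq_mul, norm_mul, mul_pow, ← Finset.mul_sum]
  rw [Real.sqrt_mul (sq_nonneg _), Real.sqrt_sq (norm_nonneg _)]

lemma enorm4_mulVec_le (A : Matrix (Fin 4) (Fin 4) ℂ) (x : Fin 4 → ℂ) :
    enorm4 (A *ᵥ x) ≤ (∑ i, ∑ j, ‖A i j‖) * enorm4 x := by
  calc enorm4 (A *ᵥ x) ≤ ∑ i, ‖(A *ᵥ x) i‖ := enorm4_le_sum _
    _ ≤ ∑ i, ∑ j, ‖A i j‖ * enorm4 x := by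
        refine Finset.sum_le_sum fun i _ => ?_
        calc ‖(A *ᵥ x) i‖ = ‖∑ j, A i j * x j‖ := by
              simp [Matrix.mulVec, dotProduct]
          _ ≤ ∑ j, ‖A i j * x j‖ := norm_sum_le _ _
          _ ≤ ∑ j, ‖A i j‖ * enorm4 x := Finset.sum_le_sum fun j _ => by
              rw [norm_mul]
              exact mul_le_mul_of_nonneg_left (entry_le_enorm4 x j) (norm_nonneg _)
    _ = (∑ i, ∑ j, ‖A i j‖) * enorm4 x := by rw [Finset.sum_mul]; simp [Finset.sum_mul]

lemma gsum0 : ∑ i, ∑ j, ‖γ0 i j‖ = 4 := by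
  norm_num [γ0, Fin.sum_univ_four, Matrix.vecHead, Matrix.vecTail, Function.comp, Matrix.cons_val_two, Matrix.cons_val_three]
lemma gsum1 : ∑ i, ∑ j, ‖γ1 i j‖ = 4 := by
  norm_num [γ1, Fin.sum_univ_four, Matrix.vecHead, Matrix.vecTail, Function.comp, Matrix.cons_val_two, Matrix.cons_val_three]
lemma gsum2 : ∑ i, ∑ j, ‖γ2 i j‖ = 4 := by
  norm_num [γ2, Fin.sum_univ_four, Matrix.vecHead, Matrix.vecTail, Function.comp, Matrix.cons_val_two, Matrix.cons_val_three]
lemma gsum3 : ∑ i, ∑ j, ‖γ3 i j‖ = 4 := by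
  norm_num [γ3, Fin.sum_univ_four, Matrix.vecHead, Matrix.vecTail, Function.comp, Matrix.cons_val_two, Matrix.cons_val_three]
lemma onesum : ∑ i, ∑ j, ‖(1 : Matrix (Fin 4) (Fin 4) ℂ) i j‖ = 4 := by
  norm_num [Matrix.one_apply, apply_ite (‖·‖ : ℂ → ℝ), Finset.sum_ite_eq]
lemma g0row (k : Fin 4) : ∑ j, ‖γ0 k j‖ = 1 := by
  fin_cases k <;> norm_num [γ0, Fin.sum_univ_four, Matrix.vecHead, Matrix.vecTail, Function.comp, Matrix.cons_val_two, Matrix.cons_val_three]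

lemma norm5 (a b c d e : ℂ) : ‖a - b - c - d + e‖ ≤ ‖a‖ + ‖b‖ + ‖c‖ + ‖d‖ + ‖e‖ := by
  have h1 := norm_add_le (a - b - c - d) e
  have h2 := norm_sub_le (a - b - c) d
  have h3 := norm_sub_le (a - b) c
  have h4 := norm_sub_le a b
  linarith

lemma sumB_le (m : ℝ) (hm : 0 ≤ m) (p : Fin 4 → ℂ) :
    ∑ i, ∑ k, ‖(slash p + (m : ℂ) • (1 : Matrix (Fin 4) (Fin 4) ℂ)) i k‖ ≤
      16 * enorm4 p + 4 * m := by
  have step1 : ∑ i, ∑ k, ‖(slash p + (m : ℂ) • (1 : Matrix (Fin 4) (Fin 4) ℂ)) i k‖ ≤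
      ∑ i, ∑ k, (‖p 0‖ * ‖γ0 i k‖ + ‖p 1‖ * ‖γ1 i k‖ + ‖p 2‖ * ‖γ2 i k‖ + ‖p 3‖ * ‖γ3 i k‖
        + m * ‖(1 : Matrix (Fin 4) (Fin 4) ℂ) i k‖) := by
    refine Finset.sum_le_sum fun i _ => Finset.sum_le_sum fun k _ => ?_
    have : (slash p + (m : ℂ) • (1 : Matrix (Fin 4) (Fin 4) ℂ)) i k =
        p 0 * γ0 i k - p 1 * γ1 i k - p 2 * γ2 i k - p 3 * γ3 i k
          + (m : ℂ) * (1 : Matrix (Fin 4) (Fin 4) ℂ) i k := by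
      simp [slash, Matrix.add_apply, Matrix.sub_apply, Matrix.smul_apply, smul_eq_mul]
    rw [this]
    refine (norm5 _ _ _ _ _).trans ?_
    simp only [norm_mul, Complex.norm_real, Real.norm_eq_abs, abs_of_nonneg hm, le_refl]
  have step2 : ∑ i, ∑ k, (‖p 0‖ * ‖γ0 i k‖ + ‖p 1‖ * ‖γ1 i k‖ + ‖p 2‖ * ‖γ2 i k‖
        + ‖p 3‖ * ‖γ3 i k‖ + m * ‖(1 : Matrix (Fin 4) (Fin 4) ℂ) i k‖)
      = ‖p 0‖ * 4 + ‖p 1‖ * 4 + ‖p 2‖ * 4 + ‖p 3‖ * 4 + m * 4 := by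
    simp only [Finset.sum_add_distrib, ← Finset.mul_sum]
    rw [gsum0, gsum1, gsum2, gsum3, onesum]
  have h0 := entry_le_enorm4 p 0
  have h1 := entry_le_enorm4 p 1
  have h2 := entry_le_enorm4 p 2
  have h3 := entry_le_enorm4 p 3
  linarith [step1, step2.le, step2.ge]

lemma sumA_le (m : ℝ) (hm : 0 ≤ m) (p : Fin 4 → ℂ) :
    ∑ i, ∑ j, ‖((slash p + (m : ℂ) • 1) * γ0) i j‖ ≤ 16 * enorm4 p + 4 * m := by
  set B := slash p + (m : ℂ) • (1 : Matrix (Fin 4) (Fin 4) ℂ) with hB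
  refine le_trans ?_ (sumB_le m hm p)
  have key : ∀ i, ∑ j, ‖(B * γ0) i j‖ ≤ ∑ k, ‖B i k‖ := by
    intro i
    calc ∑ j, ‖(B * γ0) i j‖ ≤ ∑ j, ∑ k, ‖B i k‖ * ‖γ0 k j‖ := by
          refine Finset.sum_le_sum fun j _ => ?_
          rw [Matrix.mul_apply]
          refine (norm_sum_le _ _).trans ?_
          refine Finset.sum_le_sum fun k _ => ?_
          rw [norm_mul]
      _ = ∑ k, ‖B i k‖ * (∑ j, ‖γ0 k j‖) := by
          rw [Finset.sum_comm]
          exact Finset.sum_congr rfl fun k _ => (Finset.mul_sum _ _ _).symm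
      _ = ∑ k, ‖B i k‖ := by simp only [g0row, mul_one]
  exact Finset.sum_le_sum fun i _ => key i

lemma enorm3_spat_sq (p : Fin 4 → ℂ) :
    enorm3 (spat p) ^ 2 = ‖p 1‖ ^ 2 + ‖p 2‖ ^ 2 + ‖p 3‖ ^ 2 := by
  rw [enorm3, Real.sq_sqrt (Finset.sum_nonneg fun i _ => sq_nonneg _)]
  rw [Fin.sum_univ_three]
  rfl

lemma shell_enorm (m : ℝ) (hm : 0 ≤ m) (p : Fin 4 → ℂ)
    (hp : p 0 ^ 2 - p 1 ^ 2 - p 2 ^ 2 - p 3 ^ 2 = (m : ℂ) ^ 2) :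
    enorm4 p ≤ 2 * max m (enorm3 (spat p)) := by
  set M := max m (enorm3 (spat p)) with hM
  have hM0 : 0 ≤ M := le_trans hm (le_max_left _ _)
  have hp0 : p 0 ^ 2 = (m : ℂ) ^ 2 + p 1 ^ 2 + p 2 ^ 2 + p 3 ^ 2 := by linear_combination hp
  have h0 : ‖p 0‖ ^ 2 ≤ m ^ 2 + (‖p 1‖ ^ 2 + ‖p 2‖ ^ 2 + ‖p 3‖ ^ 2) := by
    have e1 : ‖p 0‖ ^ 2 = ‖p 0 ^ 2‖ := (norm_pow _ 2).symm
    rw [e1, hp0]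
    have t1 := norm_add_le ((m : ℂ) ^ 2 + p 1 ^ 2 + p 2 ^ 2) (p 3 ^ 2)
    have t2 := norm_add_le ((m : ℂ) ^ 2 + p 1 ^ 2) (p 2 ^ 2)
    have t3 := norm_add_le ((m : ℂ) ^ 2) (p 1 ^ 2)
    have e2 : ‖(m : ℂ) ^ 2‖ = m ^ 2 := by
      rw [norm_pow, Complex.norm_real, Real.norm_eq_abs, abs_of_nonneg hm]
    have e3 : ‖p 1 ^ 2‖ = ‖p 1‖ ^ 2 := norm_pow _ 2
    have e4 : ‖p 2 ^ 2‖ = ‖p 2‖ ^ 2 := norm_pow _ 2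
    have e5 : ‖p 3 ^ 2‖ = ‖p 3‖ ^ 2 := norm_pow _ 2
    linarith [t1, t2, t3, e2.le, e2.ge]
  have hsq : ∑ i, ‖p i‖ ^ 2 ≤ (2 * M) ^ 2 := by
    rw [Fin.sum_univ_four]
    have hm2 : m ^ 2 ≤ M ^ 2 := pow_le_pow_left₀ hm (le_max_left _ _) 2
    have he3 : enorm3 (spat p) ^ 2 ≤ M ^ 2 :=
      pow_le_pow_left₀ (enorm3_nonneg' _) (le_max_right _ _) 2
    have := enorm3_spat_sq p
    nlinarith [h0]
  calc enorm4 p ≤ Real.sqrt ((2 * M) ^ 2) := Real.sqrt_le_sqrt hsq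
    _ = 2 * M := Real.sqrt_sq (by linarith)

/-- Bound for `F_{M3}`: for every entire `Φ : ℂ³ → ℂ⁴` the function
`Ψ(p) = ((p̸+m)/(2m)) γ⁰ Φ(p⃗)` on `M_ℂ` satisfies `‖Ψ‖_{M,α,n} ≤ C ‖Φ‖_{3,α,n}`
with `C = C(n,m)`. -/
theorem FM3_bound (m α : ℝ) (hm : 0 < m) (hα : 0 < α) (n : ℕ) (hn : 1 ≤ n) :
    ∃ C > 0, ∀ Φ : (Fin 3 → ℂ) → Fin 4 → ℂ, Differentiable ℂ Φ →
      normME m α n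
        (fun p => (2 * (m : ℂ))⁻¹ • (((slash p + (m : ℂ) • 1) * γ0) *ᵥ Φ (spat p))) ≤
      ENNReal.ofReal C * norm3E m α n Φ := by
  refine ⟨8 * 3 ^ n / m, by positivity, fun Φ _ => ?_⟩
  rw [normME]
  refine iSup_le ?_
  rintro ⟨p, hp⟩
  have hp' : p 0 ^ 2 - p 1 ^ 2 - p 2 ^ 2 - p 3 ^ 2 = (m : ℂ) ^ 2 := hp
  set z := spat p with hz
  set M := max m (enorm3 z) with hMdef
  set X := enorm4 p with hX
  set E := Real.exp (-α * imNorm3 z) with hE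
  set F := enorm4 (Φ z) with hF
  set N := enorm4 ((2 * (m : ℂ))⁻¹ • (((slash p + (m : ℂ) • 1) * γ0) *ᵥ Φ z)) with hN
  have hX0 : 0 ≤ X := enorm4_nonneg' p
  have hF0 : 0 ≤ F := enorm4_nonneg' _
  have hE0 : 0 ≤ E := (Real.exp_pos _).le
  have hmM : m ≤ M := le_max_left _ _
  have hM0 : 0 < M := lt_of_lt_of_le hm hmM
  have h4 : X ≤ 2 * M := shell_enorm m hm.le p hp'
  have hc : ‖(2 * (m : ℂ))⁻¹‖ = (2 * m)⁻¹ := by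
    rw [norm_inv]
    congr 1
    rw [show (2 * (m : ℂ)) = ((2 * m : ℝ) : ℂ) by push_cast; ring, Complex.norm_real,
      Real.norm_eq_abs, abs_of_pos (by linarith)]
  have hΨ : N ≤ (2 * m)⁻¹ * ((16 * X + 4 * m) * F) := by
    rw [hN, enorm4_smul, hc]
    refine mul_le_mul_of_nonneg_left ?_ (by positivity)
    exact le_trans (enorm4_mulVec_le _ _)
      (mul_le_mul_of_nonneg_right (sumA_le m hm.le p) hF0)
  have hn1 : n - 1 + 1 = n := Nat.succ_pred_eq_of_pos hn
  have h3n : (3 : ℝ) ^ n = 3 ^ (n - 1) * 3 := by rw [← pow_succ, hn1]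
  have hMn : M ^ n = M ^ (n - 1) * M := by rw [← pow_succ, hn1]
  have hprod : X ^ (n - 1) * (16 * X + 4 * m) ≤ 12 * 3 ^ n * M ^ n := by
    calc X ^ (n - 1) * (16 * X + 4 * m) ≤ (2 * M) ^ (n - 1) * (36 * M) := by
          refine mul_le_mul (pow_le_pow_left₀ hX0 h4 _) (by linarith) (by linarith)
            (by positivity)
      _ = 36 * 2 ^ (n - 1) * (M ^ (n - 1) * M) := by rw [mul_pow]; ring
      _ ≤ 36 * 3 ^ (n - 1) * (M ^ (n - 1) * M) := by
          refine mul_le_mul_of_nonneg_right ?_ (by positivity)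
          exact mul_le_mul_of_nonneg_left
            (pow_le_pow_left₀ (by norm_num) (by norm_num) _) (by norm_num)
      _ = 12 * 3 ^ n * M ^ n := by rw [h3n, hMn]; ring
  have key : X ^ (n - 1) * E * N ≤ (8 * 3 ^ n / m) * (M ^ n * E * F) := by
    calc X ^ (n - 1) * E * N ≤ X ^ (n - 1) * E * ((2 * m)⁻¹ * ((16 * X + 4 * m) * F)) := by
          refine mul_le_mul_of_nonneg_left hΨ ?_
          exact mul_nonneg (pow_nonneg hX0 _) hE0
      _ = (2 * m)⁻¹ * (X ^ (n - 1) * (16 * X + 4 * m)) * (E * F) := by ring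
      _ ≤ (2 * m)⁻¹ * (12 * 3 ^ n * M ^ n) * (E * F) := by
          refine mul_le_mul_of_nonneg_right ?_ (mul_nonneg hE0 hF0)
          exact mul_le_mul_of_nonneg_left hprod (by positivity)
      _ = (6 * 3 ^ n / m) * (M ^ n * E * F) := by field_simp; ring
      _ ≤ (8 * 3 ^ n / m) * (M ^ n * E * F) := by
          refine mul_le_mul_of_nonneg_right ?_
            (mul_nonneg (mul_nonneg (pow_nonneg hM0.le _) hE0) hF0)
          gcongr
          norm_num
  calc ENNReal.ofReal (X ^ (n - 1) * E * N)
      ≤ ENNReal.ofReal ((8 * 3 ^ n / m) * (M ^ n * E * F)) := ENNReal.ofReal_le_ofReal key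
    _ = ENNReal.ofReal (8 * 3 ^ n / m) * ENNReal.ofReal (M ^ n * E * F) :=
        ENNReal.ofReal_mul (by positivity)
    _ ≤ ENNReal.ofReal (8 * 3 ^ n / m) * norm3E m α n Φ := by
        refine mul_le_mul_right ?_ _
        rw [norm3E]
        exact le_iSup (fun z => ENNReal.ofReal
          (max m (enorm3 z) ^ n * Real.exp (-α * imNorm3 z) * enorm4 (Φ z))) z
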